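/- The range of the 1-D lifting map ℓ : [t¹, t^L] → ℝ^L equals the set of z ∈ [0,1]^L such that there exists an index l ∈ {1,...,L-1} with z_l + z_{l+1} = 1 and z_k = 0 for all k ∉ {l, l+1}. -/

import Mathlib

lemma exists_seg {n : ℕ} (t : Fin (n + 2) → ℝ) (ht : StrictMono t) {x : ℝ}
    (hx : x ∈ Set.Icc (t 0) (t (Fin.last (n + 1)))) :
    ∃ l : Fin (n + 1), x ∈ Set.Icc (t l.castSucc) (t l.succ) := by
  classical
  set S : Finset (Fin (n + 1)) := Finset.univ.filter (fun l => t l.castSucc ≤ x) with hS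
  have h0 : (0 : Fin (n + 1)) ∈ S := by
    simp only [hS, Finset.mem_filter, Finset.mem_univ, true_and]
    simpa using hx.1
  set l := S.max' ⟨0, h0⟩ with hl
  have hlm : l ∈ S := S.max'_mem _
  have hla : t l.castSucc ≤ x := by
    simpa only [hS, Finset.mem_filter, Finset.mem_univ, true_and] using hlm
  refine ⟨l, hla, ?_⟩
  by_contra hlt
  push_neg at hlt
  rcases eq_or_ne l (Fin.last n) with h | h
  · rw [h, Fin.succ_last] at hlt
    exact absurd hx.2 (not_le.mpr hlt)
  · have hln : l.1 < n := by
      rcases lt_or_eq_of_le (Nat.lt_succ_iff.mp l.2) with h' | h'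
      · exact h'
      · exact absurd (Fin.ext h') h
    set l' : Fin (n + 1) := ⟨l.1 + 1, by omega⟩ with hl'
    have hcast : l'.castSucc = l.succ := by
      apply Fin.ext; simp [hl']
    have hl'S : l' ∈ S := by
      simp only [hS, Finset.mem_filter, Finset.mem_univ, true_and, hcast]
      exact hlt.le
    have hval : (l' : ℕ) = (l : ℕ) + 1 := rfl
    have h2 : l < l' := by rw [Fin.lt_def, hval]; exact Nat.lt_succ_self _
    exact absurd (S.le_max' l' hl'S) (not_le.mpr h2)


/-- `ℓ` is the 1-D lifting map with respect to knots `t 0 < t 1 < ... < t (n+1)`: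
for `x ∈ [t l, t (l+1)]`, `ℓ x` has `l`-th coordinate `(t (l+1) - x)/(t (l+1) - t l)`,
`(l+1)`-th coordinate `(x - t l)/(t (l+1) - t l)`, and zeros elsewhere. -/
def IsLifting {n : ℕ} (t : Fin (n + 2) → ℝ) (ℓ : ℝ → Fin (n + 2) → ℝ) : Prop :=
  ∀ l : Fin (n + 1), ∀ x ∈ Set.Icc (t l.castSucc) (t l.succ),
    ℓ x = fun k =>
      if k = l.castSucc then (t l.succ - x) / (t l.succ - t l.castSucc)
      else if k = l.succ then (x - t l.castSucc) / (t l.succ - t l.castSucc)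
      else 0

theorem lifting_range {n : ℕ} (t : Fin (n + 2) → ℝ) (ℓ : ℝ → Fin (n + 2) → ℝ)
    (ht : StrictMono t) (hℓ : IsLifting t ℓ) :
    ℓ '' Set.Icc (t 0) (t (Fin.last (n + 1))) =
      {z : Fin (n + 2) → ℝ | (∀ k, z k ∈ Set.Icc (0 : ℝ) 1) ∧
        ∃ l : Fin (n + 1), z l.castSucc + z l.succ = 1 ∧
          ∀ k, k ≠ l.castSucc → k ≠ l.succ → z k = 0} := by
  ext z
  constructor
  · rintro ⟨x, hx, rfl⟩
    obtain ⟨l, hxl⟩ := exists_seg t ht hx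
    rw [hℓ l x hxl]
    have hab : t l.castSucc < t l.succ := ht (Fin.castSucc_lt_succ : l.castSucc < l.succ)
    have hne : l.succ ≠ l.castSucc := (Fin.castSucc_lt_succ : l.castSucc < l.succ).ne'
    have hba : (0:ℝ) < t l.succ - t l.castSucc := sub_pos.mpr hab
    refine ⟨?_, l, ?_, ?_⟩
    · intro k
      by_cases h1 : k = l.castSucc
      · simp only [h1, if_pos rfl, Set.mem_Icc, if_true]
        constructor
        · exact div_nonneg (sub_nonneg.mpr hxl.2) hba.le
        · rw [div_le_one hba]; linarith [hxl.1]
      · by_cases h2 : k = l.succ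
        · simp only [h1, h2, Set.mem_Icc]
          rw [if_neg hne, if_true]
          constructor
          · exact div_nonneg (sub_nonneg.mpr hxl.1) hba.le
          · rw [div_le_one hba]; linarith [hxl.2]
        · simp [h1, h2]
    · simp only [if_pos rfl, if_neg hne, ↓reduceIte, if_neg hne.symm]
      field_simp
      ring
    · intro k hk1 hk2
      simp [hk1, hk2]
  · rintro ⟨hz01, l, hsum, hzero⟩
    have hab : t l.castSucc < t l.succ := ht (Fin.castSucc_lt_succ : l.castSucc < l.succ)
    have hne : l.succ ≠ l.castSucc := (Fin.castSucc_lt_succ : l.castSucc < l.succ).ne'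
    have hba : (0:ℝ) < t l.succ - t l.castSucc := sub_pos.mpr hab
    set x : ℝ := t l.castSucc + z l.succ * (t l.succ - t l.castSucc) with hxdef
    have hz0 : (0:ℝ) ≤ z l.succ := (hz01 l.succ).1
    have hz1 : z l.succ ≤ 1 := (hz01 l.succ).2
    have hxseg : x ∈ Set.Icc (t l.castSucc) (t l.succ) := by
      constructor
      · nlinarith
      · nlinarith
    refine ⟨x, ⟨?_, ?_⟩, ?_⟩
    · exact le_trans (ht.monotone (Fin.zero_le _)) hxseg.1
    · exact le_trans hxseg.2 (ht.monotone (Fin.le_last _))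
    · rw [hℓ l x hxseg]
      funext k
      by_cases h1 : k = l.castSucc
      · simp only [h1, if_pos rfl, ↓reduceIte, if_neg hne.symm]
        rw [hxdef]
        field_simp
        nlinarith [hsum]
      · by_cases h2 : k = l.succ
        · simp only [h1, h2]
          rw [if_neg hne, if_true]
          rw [hxdef]
          field_simp
          ring
        · simp [h1, h2, hzero k h1 h2]
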